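/- For a fully nondegenerate bilinear map t : U₂ × U₁ → U₀ over a commutative ring K, the centroid Cen(t) = {(ω₂,ω₁,ω₀) ∈ End(U₂)×End(U₁)×End(U₀) : ω₀⟨t|u₂,u₁⟩ = ⟨t|ω₂u₂,u₁⟩ = ⟨t|u₂,ω₁u₁⟩ for all u₂,u₁} is a commutative subring of End(U₂)×End(U₁)×End(U₀). -/
import Mathlib


/-- for a fully nondegenerate bilinear map `t : U₂ × U₁ → U₀` of
`K`-modules, the centroid is a commutative subring of `End(U₂) × End(U₁) × End(U₀)`. -/
theorem centroid_commutative_subring (K : Type) [CommRing K]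
    (U₂ U₁ U₀ : Type) [AddCommGroup U₂] [AddCommGroup U₁] [AddCommGroup U₀]
    [Module K U₂] [Module K U₁] [Module K U₀]
    (t : U₂ →ₗ[K] U₁ →ₗ[K] U₀)
    -- full: the image of t spans U₀
    (hfull : Submodule.span K {w : U₀ | ∃ u₂ u₁, t u₂ u₁ = w} = ⊤)
    -- nondegenerate in each input slot
    (hnd₂ : ∀ u₂ : U₂, (∀ u₁ : U₁, t u₂ u₁ = 0) → u₂ = 0)
    (hnd₁ : ∀ u₁ : U₁, (∀ u₂ : U₂, t u₂ u₁ = 0) → u₁ = 0) :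
    ∃ S : Subring (Module.End K U₂ × Module.End K U₁ × Module.End K U₀),
      (S : Set (Module.End K U₂ × Module.End K U₁ × Module.End K U₀)) =
        {ω | ∀ u₂ u₁, ω.2.2 (t u₂ u₁) = t (ω.1 u₂) u₁ ∧
              ω.2.2 (t u₂ u₁) = t u₂ (ω.2.1 u₁)} ∧
      ∀ x ∈ S, ∀ y ∈ S, x * y = y * x := by
  refine ⟨{
    carrier := {ω | ∀ u₂ u₁, ω.2.2 (t u₂ u₁) = t (ω.1 u₂) u₁ ∧
              ω.2.2 (t u₂ u₁) = t u₂ (ω.2.1 u₁)}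
    one_mem' := by intro u₂ u₁; simp
    mul_mem' := by
      intro a b ha hb u₂ u₁
      constructor
      · show a.2.2 (b.2.2 (t u₂ u₁)) = t (a.1 (b.1 u₂)) u₁
        rw [(hb u₂ u₁).1, (ha (b.1 u₂) u₁).1]
      · show a.2.2 (b.2.2 (t u₂ u₁)) = t u₂ (a.2.1 (b.2.1 u₁))
        rw [(hb u₂ u₁).2, (ha u₂ (b.2.1 u₁)).2]
    zero_mem' := by intro u₂ u₁; simp
    add_mem' := by
      intro a b ha hb u₂ u₁
      constructor
      · show a.2.2 (t u₂ u₁) + b.2.2 (t u₂ u₁) = t (a.1 u₂ + b.1 u₂) u₁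
        rw [(ha u₂ u₁).1, (hb u₂ u₁).1, map_add, LinearMap.add_apply]
      · show a.2.2 (t u₂ u₁) + b.2.2 (t u₂ u₁) = t u₂ (a.2.1 u₁ + b.2.1 u₁)
        rw [(ha u₂ u₁).2, (hb u₂ u₁).2, map_add]
    neg_mem' := by
      intro a ha u₂ u₁
      constructor
      · show -(a.2.2 (t u₂ u₁)) = t (-(a.1 u₂)) u₁
        rw [(ha u₂ u₁).1, map_neg, LinearMap.neg_apply]
      · show -(a.2.2 (t u₂ u₁)) = t u₂ (-(a.2.1 u₁))
        rw [(ha u₂ u₁).2, map_neg]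
  }, rfl, ?_⟩
  intro x hx y hy
  have h0 : (x.2.2 * y.2.2 : Module.End K U₀) = y.2.2 * x.2.2 := by
    apply LinearMap.ext_on hfull
    rintro w ⟨u₂, u₁, rfl⟩
    show x.2.2 (y.2.2 (t u₂ u₁)) = y.2.2 (x.2.2 (t u₂ u₁))
    rw [(hy u₂ u₁).2, (hx u₂ (y.2.1 u₁)).1, (hx u₂ u₁).1, (hy (x.1 u₂) u₁).2]
  have key : ∀ u₂ u₁, t (x.1 (y.1 u₂)) u₁ = t (y.1 (x.1 u₂)) u₁ := by
    intro u₂ u₁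
    rw [← (hx (y.1 u₂) u₁).1, ← (hy u₂ u₁).1, ← (hy (x.1 u₂) u₁).1, ← (hx u₂ u₁).1,
      ← Module.End.mul_apply, ← Module.End.mul_apply, h0]
  have key' : ∀ u₂ u₁, t u₂ (x.2.1 (y.2.1 u₁)) = t u₂ (y.2.1 (x.2.1 u₁)) := by
    intro u₂ u₁
    rw [← (hx u₂ (y.2.1 u₁)).2, ← (hy u₂ u₁).2, ← (hy u₂ (x.2.1 u₁)).2, ← (hx u₂ u₁).2,
      ← Module.End.mul_apply, ← Module.End.mul_apply, h0]
  have h2 : (x.1 * y.1 : Module.End K U₂) = y.1 * x.1 := by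
    apply LinearMap.ext; intro u₂
    have := hnd₂ (x.1 (y.1 u₂) - y.1 (x.1 u₂)) (fun u₁ => by
      rw [map_sub, LinearMap.sub_apply, key, sub_self])
    simpa [sub_eq_zero] using this
  have h1 : (x.2.1 * y.2.1 : Module.End K U₁) = y.2.1 * x.2.1 := by
    apply LinearMap.ext; intro u₁
    have := hnd₁ (x.2.1 (y.2.1 u₁) - y.2.1 (x.2.1 u₁)) (fun u₂ => by
      rw [map_sub, key', sub_self])
    simpa [sub_eq_zero] using this
  exact Prod.ext h2 (Prod.ext h1 h0)
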